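/- Let v, v* ∈ R^3 with |v| < 1, |v*| < 1, and set W = 1/√(1-|v|²). Define the 7×7 symmetric block matrices A₃ = [[G, -G, 0],[-G, H, 0],[0, 0, W²|v-v*|²]] and A₂ = [[O, O, b₁ᵀ],[O, O, b₂ᵀ],[b₁, b₂, 0]], where G = (1-|v*|²)I₃ + (v*)ᵀv*, H = (1 + |v-v*|² - |v*|²)I₃ + (v*)ᵀv* - (v-v*)ᵀ(v-v*), b₁ = (1-|v*|²)(v*-v) + (|v*|² - v·v*)v*, b₂ = (1-|v|²)(v-v*) + (|v|² - v·v*)v. Then both A₃ + A₂ and A₃ - A₂ are positive semi-definite. -/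

import Mathlib

open Matrix

set_option maxHeartbeats 1600000

lemma aux_sos_pos (v1 v2 v3 u1 u2 u3 p1 p2 p3 q1 q2 q3 t W : ℝ)
    (ha : 0 < 1 - (v1^2+v2^2+v3^2)) (hb : 0 ≤ 1 - (u1^2+u2^2+u3^2))
    (hW2 : W^2 * (1 - (v1^2+v2^2+v3^2)) = 1) :
    0 ≤ (1-(u1^2+u2^2+u3^2)) * ((p1-q1)^2+(p2-q2)^2+(p3-q3)^2)
      + (u1*(p1-q1)+u2*(p2-q2)+u3*(p3-q3))^2
      + ((v1-u1)^2+(v2-u2)^2+(v3-u3)^2) * (q1^2+q2^2+q3^2)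
      - ((v1-u1)*q1+(v2-u2)*q2+(v3-u3)*q3)^2
      + W^2 * ((v1-u1)^2+(v2-u2)^2+(v3-u3)^2) * t^2
      + (1) * (2*t) * ( (1-(u1^2+u2^2+u3^2))*((u1-v1)*p1+(u2-v2)*p2+(u3-v3)*p3)
         + ((u1^2+u2^2+u3^2) - (v1*u1+v2*u2+v3*u3))*(u1*p1+u2*p2+u3*p3)
         + (1-(v1^2+v2^2+v3^2))*((v1-u1)*q1+(v2-u2)*q2+(v3-u3)*q3)
         + ((v1^2+v2^2+v3^2) - (v1*u1+v2*u2+v3*u3))*(v1*q1+v2*q2+v3*q3) ) := by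
  have key : (1 - (v1^2+v2^2+v3^2)) *
      ((1-(u1^2+u2^2+u3^2)) * ((p1-q1)^2+(p2-q2)^2+(p3-q3)^2)
      + (u1*(p1-q1)+u2*(p2-q2)+u3*(p3-q3))^2
      + ((v1-u1)^2+(v2-u2)^2+(v3-u3)^2) * (q1^2+q2^2+q3^2)
      - ((v1-u1)*q1+(v2-u2)*q2+(v3-u3)*q3)^2
      + W^2 * ((v1-u1)^2+(v2-u2)^2+(v3-u3)^2) * t^2
      + (1) * (2*t) * ( (1-(u1^2+u2^2+u3^2))*((u1-v1)*p1+(u2-v2)*p2+(u3-v3)*p3)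
         + ((u1^2+u2^2+u3^2) - (v1*u1+v2*u2+v3*u3))*(u1*p1+u2*p2+u3*p3)
         + (1-(v1^2+v2^2+v3^2))*((v1-u1)*q1+(v2-u2)*q2+(v3-u3)*q3)
         + ((v1^2+v2^2+v3^2) - (v1*u1+v2*u2+v3*u3))*(v1*q1+v2*q2+v3*q3) ))
      = (1-(v1^2+v2^2+v3^2)) *
      ( (1-(u1^2+u2^2+u3^2)) *
          (((p1-q1) - (1)*t*(v1-u1))^2 + ((p2-q2) - (1)*t*(v2-u2))^2 + ((p3-q3) - (1)*t*(v3-u3))^2)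
        + ((u1*(p1-q1)+u2*(p2-q2)+u3*(p3-q3)) - (1)*t*((v1-u1)*u1+(v2-u2)*u2+(v3-u3)*u3))^2
        + (((v2-u2)*q3-(v3-u3)*q2) + (1)*t*(v2*u3-v3*u2))^2
        + (((v3-u3)*q1-(v1-u1)*q3) + (1)*t*(v3*u1-v1*u3))^2
        + (((v1-u1)*q2-(v2-u2)*q1) + (1)*t*(v1*u2-v2*u1))^2 )
      + t^2 * (v1^2+v2^2+v3^2) * ((v1-u1)^2+(v2-u2)^2+(v3-u3)^2) := by
    linear_combination (((v1-u1)^2+(v2-u2)^2+(v3-u3)^2) * t^2) * hW2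
  have h2 : 0 ≤ (1-(v1^2+v2^2+v3^2)) *
      ( (1-(u1^2+u2^2+u3^2)) *
          (((p1-q1) - (1)*t*(v1-u1))^2 + ((p2-q2) - (1)*t*(v2-u2))^2 + ((p3-q3) - (1)*t*(v3-u3))^2)
        + ((u1*(p1-q1)+u2*(p2-q2)+u3*(p3-q3)) - (1)*t*((v1-u1)*u1+(v2-u2)*u2+(v3-u3)*u3))^2
        + (((v2-u2)*q3-(v3-u3)*q2) + (1)*t*(v2*u3-v3*u2))^2
        + (((v3-u3)*q1-(v1-u1)*q3) + (1)*t*(v3*u1-v1*u3))^2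
        + (((v1-u1)*q2-(v2-u2)*q1) + (1)*t*(v1*u2-v2*u1))^2 )
      + t^2 * (v1^2+v2^2+v3^2) * ((v1-u1)^2+(v2-u2)^2+(v3-u3)^2) := by
    refine add_nonneg (mul_nonneg ha.le (add_nonneg (add_nonneg (add_nonneg
      (add_nonneg (mul_nonneg hb (by positivity)) (by positivity)) (by positivity))
      (by positivity)) (by positivity))) (by positivity)
  rw [← key] at h2
  exact nonneg_of_mul_nonneg_right h2 ha

lemma aux_sos_neg (v1 v2 v3 u1 u2 u3 p1 p2 p3 q1 q2 q3 t W : ℝ)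
    (ha : 0 < 1 - (v1^2+v2^2+v3^2)) (hb : 0 ≤ 1 - (u1^2+u2^2+u3^2))
    (hW2 : W^2 * (1 - (v1^2+v2^2+v3^2)) = 1) :
    0 ≤ (1-(u1^2+u2^2+u3^2)) * ((p1-q1)^2+(p2-q2)^2+(p3-q3)^2)
      + (u1*(p1-q1)+u2*(p2-q2)+u3*(p3-q3))^2
      + ((v1-u1)^2+(v2-u2)^2+(v3-u3)^2) * (q1^2+q2^2+q3^2)
      - ((v1-u1)*q1+(v2-u2)*q2+(v3-u3)*q3)^2
      + W^2 * ((v1-u1)^2+(v2-u2)^2+(v3-u3)^2) * t^2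
      + (-1) * (2*t) * ( (1-(u1^2+u2^2+u3^2))*((u1-v1)*p1+(u2-v2)*p2+(u3-v3)*p3)
         + ((u1^2+u2^2+u3^2) - (v1*u1+v2*u2+v3*u3))*(u1*p1+u2*p2+u3*p3)
         + (1-(v1^2+v2^2+v3^2))*((v1-u1)*q1+(v2-u2)*q2+(v3-u3)*q3)
         + ((v1^2+v2^2+v3^2) - (v1*u1+v2*u2+v3*u3))*(v1*q1+v2*q2+v3*q3) ) := by
  have key : (1 - (v1^2+v2^2+v3^2)) *
      ((1-(u1^2+u2^2+u3^2)) * ((p1-q1)^2+(p2-q2)^2+(p3-q3)^2)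
      + (u1*(p1-q1)+u2*(p2-q2)+u3*(p3-q3))^2
      + ((v1-u1)^2+(v2-u2)^2+(v3-u3)^2) * (q1^2+q2^2+q3^2)
      - ((v1-u1)*q1+(v2-u2)*q2+(v3-u3)*q3)^2
      + W^2 * ((v1-u1)^2+(v2-u2)^2+(v3-u3)^2) * t^2
      + (-1) * (2*t) * ( (1-(u1^2+u2^2+u3^2))*((u1-v1)*p1+(u2-v2)*p2+(u3-v3)*p3)
         + ((u1^2+u2^2+u3^2) - (v1*u1+v2*u2+v3*u3))*(u1*p1+u2*p2+u3*p3)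
         + (1-(v1^2+v2^2+v3^2))*((v1-u1)*q1+(v2-u2)*q2+(v3-u3)*q3)
         + ((v1^2+v2^2+v3^2) - (v1*u1+v2*u2+v3*u3))*(v1*q1+v2*q2+v3*q3) ))
      = (1-(v1^2+v2^2+v3^2)) *
      ( (1-(u1^2+u2^2+u3^2)) *
          (((p1-q1) - (-1)*t*(v1-u1))^2 + ((p2-q2) - (-1)*t*(v2-u2))^2 + ((p3-q3) - (-1)*t*(v3-u3))^2)
        + ((u1*(p1-q1)+u2*(p2-q2)+u3*(p3-q3)) - (-1)*t*((v1-u1)*u1+(v2-u2)*u2+(v3-u3)*u3))^2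
        + (((v2-u2)*q3-(v3-u3)*q2) + (-1)*t*(v2*u3-v3*u2))^2
        + (((v3-u3)*q1-(v1-u1)*q3) + (-1)*t*(v3*u1-v1*u3))^2
        + (((v1-u1)*q2-(v2-u2)*q1) + (-1)*t*(v1*u2-v2*u1))^2 )
      + t^2 * (v1^2+v2^2+v3^2) * ((v1-u1)^2+(v2-u2)^2+(v3-u3)^2) := by
    linear_combination (((v1-u1)^2+(v2-u2)^2+(v3-u3)^2) * t^2) * hW2
  have h2 : 0 ≤ (1-(v1^2+v2^2+v3^2)) *
      ( (1-(u1^2+u2^2+u3^2)) *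
          (((p1-q1) - (-1)*t*(v1-u1))^2 + ((p2-q2) - (-1)*t*(v2-u2))^2 + ((p3-q3) - (-1)*t*(v3-u3))^2)
        + ((u1*(p1-q1)+u2*(p2-q2)+u3*(p3-q3)) - (-1)*t*((v1-u1)*u1+(v2-u2)*u2+(v3-u3)*u3))^2
        + (((v2-u2)*q3-(v3-u3)*q2) + (-1)*t*(v2*u3-v3*u2))^2
        + (((v3-u3)*q1-(v1-u1)*q3) + (-1)*t*(v3*u1-v1*u3))^2
        + (((v1-u1)*q2-(v2-u2)*q1) + (-1)*t*(v1*u2-v2*u1))^2 )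
      + t^2 * (v1^2+v2^2+v3^2) * ((v1-u1)^2+(v2-u2)^2+(v3-u3)^2) := by
    refine add_nonneg (mul_nonneg ha.le (add_nonneg (add_nonneg (add_nonneg
      (add_nonneg (mul_nonneg hb (by positivity)) (by positivity)) (by positivity))
      (by positivity)) (by positivity))) (by positivity)
  rw [← key] at h2
  exact nonneg_of_mul_nonneg_right h2 ha

/-- The 7×7 block matrices `A₃ ± A₂` from the proof of the source-term estimate
are positive semi-definite. Blocks: `G = (1-|v*|²)I₃ + (v*)ᵀv*`,
`H = (1+|v-v*|²-|v*|²)I₃ + (v*)ᵀv* - (v-v*)ᵀ(v-v*)`,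
`b₁ = (1-|v*|²)(v*-v) + (|v*|²-v·v*)v*`, `b₂ = (1-|v|²)(v-v*) + (|v|²-v·v*)v`,
`A₃ = [[G,-G,0],[-G,H,0],[0,0,W²|v-v*|²]]`, `A₂ = [[O,O,b₁ᵀ],[O,O,b₂ᵀ],[b₁,b₂,0]]`. -/
theorem stmt9 (v vs : Fin 3 → ℝ)
    (hv : Real.sqrt (∑ i, v i ^ 2) < 1) (hvs : Real.sqrt (∑ i, vs i ^ 2) < 1)
    (W : ℝ) (hW : W = 1 / Real.sqrt (1 - ∑ i, v i ^ 2))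
    (G H : Matrix (Fin 3) (Fin 3) ℝ) (b1 b2 : Fin 3 → ℝ)
    (hG : G = (1 - ∑ i, vs i ^ 2) • (1 : Matrix (Fin 3) (Fin 3) ℝ) + Matrix.vecMulVec vs vs)
    (hH : H = (1 + (∑ i, (v i - vs i) ^ 2) - ∑ i, vs i ^ 2) • (1 : Matrix (Fin 3) (Fin 3) ℝ)
        + Matrix.vecMulVec vs vs - Matrix.vecMulVec (v - vs) (v - vs))
    (hb1 : b1 = (1 - ∑ i, vs i ^ 2) • (vs - v) + ((∑ i, vs i ^ 2) - ∑ i, v i * vs i) • vs)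
    (hb2 : b2 = (1 - ∑ i, v i ^ 2) • (v - vs) + ((∑ i, v i ^ 2) - ∑ i, v i * vs i) • v)
    (A3 A2 : Matrix (Fin 7) (Fin 7) ℝ)
    (hA3 : A3 = fun i j =>
      if hi : i.val < 3 then
        (if hj : j.val < 3 then G ⟨i.val, hi⟩ ⟨j.val, hj⟩
         else if hj6 : j.val < 6 then -G ⟨i.val, hi⟩ ⟨j.val - 3, by omega⟩ else 0)
      else if hi6 : i.val < 6 then
        (if hj : j.val < 3 then -G ⟨i.val - 3, by omega⟩ ⟨j.val, hj⟩
         else if hj6 : j.val < 6 then H ⟨i.val - 3, by omega⟩ ⟨j.val - 3, by omega⟩ else 0)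
      else
        (if hj6 : j.val < 6 then 0
         else W ^ 2 * (∑ i, (v i - vs i) ^ 2)))
    (hA2 : A2 = fun i j =>
      if hi : i.val < 3 then
        (if hj6 : j.val < 6 then 0 else b1 ⟨i.val, hi⟩)
      else if hi6 : i.val < 6 then
        (if hj6 : j.val < 6 then 0 else b2 ⟨i.val - 3, by omega⟩)
      else
        (if hj : j.val < 3 then b1 ⟨j.val, hj⟩
         else if hj6 : j.val < 6 then b2 ⟨j.val - 3, by omega⟩ else 0)) :
    (A3 + A2).PosSemidef ∧ (A3 - A2).PosSemidef := by
  have hv2 : (∑ i, v i ^ 2) < 1 := by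
    nlinarith [Real.sq_sqrt (show (0:ℝ) ≤ ∑ i, v i ^ 2 by positivity),
      Real.sqrt_nonneg (∑ i, v i ^ 2), hv]
  have hvs2 : (∑ i, vs i ^ 2) < 1 := by
    nlinarith [Real.sq_sqrt (show (0:ℝ) ≤ ∑ i, vs i ^ 2 by positivity),
      Real.sqrt_nonneg (∑ i, vs i ^ 2), hvs]
  have ha : 0 < 1 - (v 0 ^ 2 + v 1 ^ 2 + v 2 ^ 2) := by
    rw [Fin.sum_univ_three] at hv2; linarith
  have hb : (0:ℝ) ≤ 1 - (vs 0 ^ 2 + vs 1 ^ 2 + vs 2 ^ 2) := by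
    rw [Fin.sum_univ_three] at hvs2; linarith
  have hW2 : W ^ 2 * (1 - (v 0 ^ 2 + v 1 ^ 2 + v 2 ^ 2)) = 1 := by
    rw [hW, div_pow, one_pow, Real.sq_sqrt (by linarith [hv2] : (0:ℝ) ≤ 1 - ∑ i, v i ^ 2),
      Fin.sum_univ_three, one_div, inv_mul_cancel₀ (by linarith : (1 - (v 0 ^ 2 + v 1 ^ 2 + v 2 ^ 2)) ≠ 0)]
  have hGsymm : ∀ i j, G i j = G j i := by
    intro i j
    rw [hG]
    simp only [Matrix.add_apply, Matrix.smul_apply, Matrix.vecMulVec_apply, Matrix.one_apply,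
      smul_eq_mul]
    rcases eq_or_ne i j with h | h
    · rw [h]
    · rw [if_neg h, if_neg (Ne.symm h)]; ring
  have hHsymm : ∀ i j, H i j = H j i := by
    intro i j
    rw [hH]
    simp only [Matrix.sub_apply, Matrix.add_apply, Matrix.smul_apply, Matrix.vecMulVec_apply,
      Matrix.one_apply, Pi.sub_apply, smul_eq_mul]
    rcases eq_or_ne i j with h | h
    · rw [h]
    · rw [if_neg h, if_neg (Ne.symm h)]; ring
  have h3herm : A3.IsHermitian := by
    rw [Matrix.IsHermitian, conjTranspose_eq_transpose_of_trivial]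
    ext i j
    rw [Matrix.transpose_apply, hA3]
    simp only
    split_ifs <;>
      first
      | rfl
      | (exfalso; omega)
      | exact hGsymm _ _
      | exact hHsymm _ _
      | (rw [hGsymm]; try rfl)
  have h2herm : A2.IsHermitian := by
    rw [Matrix.IsHermitian, conjTranspose_eq_transpose_of_trivial]
    ext i j
    rw [Matrix.transpose_apply, hA2]
    simp only
    split_ifs <;>
      first
      | rfl
      | (exfalso; omega)
  subst hA3 hA2 hG hH hb1 hb2
  constructor
  · refine Matrix.posSemidef_iff_dotProduct_mulVec.mpr ⟨h3herm.add h2herm, fun x => ?_⟩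
    erw [Matrix.add_mulVec, dotProduct_add]
    simp only [star_trivial, dotProduct, Matrix.mulVec,
      Fin.sum_univ_seven, Fin.sum_univ_three,
      show ((3:Fin 7):ℕ) = 3 from rfl, show ((4:Fin 7):ℕ) = 4 from rfl,
      show ((5:Fin 7):ℕ) = 5 from rfl, show ((6:Fin 7):ℕ) = 6 from rfl]
    norm_num [Matrix.add_apply, Matrix.sub_apply, Matrix.smul_apply, Matrix.one_apply,
      Matrix.vecMulVec_apply, Pi.add_apply, Pi.sub_apply, Pi.smul_apply, smul_eq_mul,
      Fin.sum_univ_three, show (⟨2, by omega⟩ : Fin 3) = 2 from rfl,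
      (show (0:Fin 3) ≠ 2 by decide), (show (1:Fin 3) ≠ 2 by decide),
      (show (2:Fin 3) ≠ 0 by decide), (show (2:Fin 3) ≠ 1 by decide)]
    linarith [aux_sos_pos (v 0) (v 1) (v 2) (vs 0) (vs 1) (vs 2)
      (x 0) (x 1) (x 2) (x 3) (x 4) (x 5) (x 6) W ha hb hW2]
  · refine Matrix.posSemidef_iff_dotProduct_mulVec.mpr ⟨h3herm.sub h2herm, fun x => ?_⟩
    erw [Matrix.sub_mulVec, dotProduct_sub]
    simp only [star_trivial, dotProduct, Matrix.mulVec,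
      Fin.sum_univ_seven, Fin.sum_univ_three,
      show ((3:Fin 7):ℕ) = 3 from rfl, show ((4:Fin 7):ℕ) = 4 from rfl,
      show ((5:Fin 7):ℕ) = 5 from rfl, show ((6:Fin 7):ℕ) = 6 from rfl]
    norm_num [Matrix.add_apply, Matrix.sub_apply, Matrix.smul_apply, Matrix.one_apply,
      Matrix.vecMulVec_apply, Pi.add_apply, Pi.sub_apply, Pi.smul_apply, smul_eq_mul,
      Fin.sum_univ_three, show (⟨2, by omega⟩ : Fin 3) = 2 from rfl,
      (show (0:Fin 3) ≠ 2 by decide), (show (1:Fin 3) ≠ 2 by decide),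
      (show (2:Fin 3) ≠ 0 by decide), (show (2:Fin 3) ≠ 1 by decide)]
    linarith [aux_sos_neg (v 0) (v 1) (v 2) (vs 0) (vs 1) (vs 2)
      (x 0) (x 1) (x 2) (x 3) (x 4) (x 5) (x 6) W ha hb hW2]
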